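/- For every N ∈ ℕ and every continuous function φ : [0,1]^N → ℂ, ∫_{𝒜} φ(sin y_1, …, sin y_N) · J_{Sp(N)}(y_1,…,y_N) dy = ∫_{Δ_N} φ(ξ_1,…,ξ_N) · (∏_{j=1}^N 2ξ_j) · ∏_{j>k} (ξ_j²(1−ξ_k²) − (1−ξ_j²)ξ_k²) dξ, where Δ_N = {ξ ∈ ℝ^N : 0 ≤ ξ_1 ≤ ξ_2 ≤ ⋯ ≤ ξ_N ≤ 1} and both integrals are with respect to Lebesgue measure. -/

import Mathlib

/-!
The substitution `ξ_j = sin y_j` in the integral of a continuous function against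
the Jacobian `J_{Sp(N)}`.
-/

open Real

noncomputable section

/-- The simplex `𝒜 = {y ∈ ℝ^N : 0 ≤ y_1 ≤ y_2 ≤ ⋯ ≤ y_N ≤ π/2}`. -/
def ASet (N : ℕ) : Set (Fin N → ℝ) :=
  {y | (∀ i, 0 ≤ y i ∧ y i ≤ π / 2) ∧ Monotone y}

/-- The simplex `Δ_N = {ξ ∈ ℝ^N : 0 ≤ ξ_1 ≤ ξ_2 ≤ ⋯ ≤ ξ_N ≤ 1}`. -/
def DeltaSet (N : ℕ) : Set (Fin N → ℝ) :=
  {ξ | (∀ i, 0 ≤ ξ i ∧ ξ i ≤ 1) ∧ Monotone ξ}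

/-- The Jacobian
`J_{Sp(N)}(y) = ∏_j sin(2 y_j) · ∏_{j>k} sin(y_j − y_k) sin(y_j + y_k)`. -/
def JSp (N : ℕ) (y : Fin N → ℝ) : ℝ :=
  (∏ j, Real.sin (2 * y j)) *
    ∏ j, ∏ k ∈ Finset.univ.filter (fun k => k < j),
      Real.sin (y j - y k) * Real.sin (y j + y k)

/-- The transformed weight
`(∏_j 2ξ_j) · ∏_{j>k} (ξ_j²(1−ξ_k²) − (1−ξ_j²)ξ_k²)`. -/
def JSpXi (N : ℕ) (ξ : Fin N → ℝ) : ℝ :=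
  (∏ j, 2 * ξ j) *
    ∏ j, ∏ k ∈ Finset.univ.filter (fun k => k < j),
      ((ξ j) ^ 2 * (1 - (ξ k) ^ 2) - (1 - (ξ j) ^ 2) * (ξ k) ^ 2)

lemma sin_sub_mul_sin_add (a b : ℝ) :
    Real.sin (a - b) * Real.sin (a + b) =
      Real.sin a ^ 2 * (1 - Real.sin b ^ 2) - (1 - Real.sin a ^ 2) * Real.sin b ^ 2 := by
  rw [Real.sin_sub, Real.sin_add]
  have ha := Real.sin_sq_add_cos_sq a
  have hb := Real.sin_sq_add_cos_sq b
  nlinarith [ha, hb]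

lemma JSp_eq (N : ℕ) (y : Fin N → ℝ) :
    JSp N y = (∏ i, Real.cos (y i)) * JSpXi N (fun i => Real.sin (y i)) := by
  unfold JSp JSpXi
  have h1 : (∏ j, Real.sin (2 * y j)) = (∏ j, 2 * Real.sin (y j)) * ∏ j, Real.cos (y j) := by
    rw [← Finset.prod_mul_distrib]
    exact Finset.prod_congr rfl fun j _ => by rw [Real.sin_two_mul]
  have h2 : (∏ j, ∏ k ∈ Finset.univ.filter (fun k => k < j),
        Real.sin (y j - y k) * Real.sin (y j + y k)) =
      ∏ j, ∏ k ∈ Finset.univ.filter (fun k => k < j),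
        (Real.sin (y j) ^ 2 * (1 - Real.sin (y k) ^ 2) -
          (1 - Real.sin (y j) ^ 2) * Real.sin (y k) ^ 2) :=
    Finset.prod_congr rfl fun j _ => Finset.prod_congr rfl fun k _ =>
      sin_sub_mul_sin_add (y j) (y k)
  rw [h1, h2]; ring

lemma ASet_measurable (N : ℕ) : MeasurableSet (ASet N) := by
  have h1 : MeasurableSet {y : Fin N → ℝ | ∀ i, 0 ≤ y i ∧ y i ≤ π / 2} := by
    rw [Set.setOf_forall]
    refine MeasurableSet.iInter fun i => ?_
    exact (measurableSet_le measurable_const (measurable_pi_apply i)).inter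
      (measurableSet_le (measurable_pi_apply i) measurable_const)
  have h2 : MeasurableSet {y : Fin N → ℝ | Monotone y} := by
    have : {y : Fin N → ℝ | Monotone y} = ⋂ (p : Fin N × Fin N) (_ : p.1 ≤ p.2),
        {y | y p.1 ≤ y p.2} := by
      ext y
      simp only [Set.mem_setOf_eq, Set.mem_iInter]
      exact ⟨fun h p hp => h hp, fun h i j hij => h (i, j) hij⟩
    rw [this]
    exact MeasurableSet.iInter fun p => MeasurableSet.iInter fun _ =>
      measurableSet_le (measurable_pi_apply _) (measurable_pi_apply _)
  exact h1.inter h2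

lemma image_ASet (N : ℕ) :
    (fun y : Fin N → ℝ => fun i => Real.sin (y i)) '' ASet N = DeltaSet N := by
  ext ξ
  constructor
  · rintro ⟨y, ⟨hy1, hy2⟩, rfl⟩
    refine ⟨fun i => ⟨Real.sin_nonneg_of_nonneg_of_le_pi (hy1 i).1
      ((hy1 i).2.trans (by linarith [Real.pi_pos])), Real.sin_le_one _⟩, ?_⟩
    intro i j hij
    exact Real.strictMonoOn_sin.monotoneOn
      ⟨by linarith [(hy1 i).1, Real.pi_pos], (hy1 i).2⟩ ⟨by linarith [(hy1 j).1, Real.pi_pos], (hy1 j).2⟩ (hy2 hij)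
  · rintro ⟨h1, h2⟩
    refine ⟨fun i => Real.arcsin (ξ i), ⟨fun i => ⟨Real.arcsin_nonneg.2 (h1 i).1,
      Real.arcsin_le_pi_div_two _⟩, fun i j hij => Real.monotone_arcsin (h2 hij)⟩, ?_⟩
    funext i
    exact Real.sin_arcsin (by linarith [(h1 i).1]) (h1 i).2

/-- **Substituting `ξ_j = sin y_j`**: for every continuous `φ : [0,1]^N → ℂ`,
`∫_𝒜 φ(sin y) J_{Sp(N)}(y) dy = ∫_{Δ_N} φ(ξ) (∏_j 2ξ_j) ∏_{j>k}(ξ_j²(1−ξ_k²) − (1−ξ_j²)ξ_k²) dξ`. -/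
theorem Sp_jacobian_substitution (N : ℕ) (φ : (Fin N → ℝ) → ℂ)
    (hφ : ContinuousOn φ (Set.univ.pi fun _ : Fin N => Set.Icc (0 : ℝ) 1)) :
    ∫ y in ASet N, φ (fun i => Real.sin (y i)) * (JSp N y : ℂ) =
      ∫ ξ in DeltaSet N, φ ξ * (JSpXi N ξ : ℂ) := by
  set f : (Fin N → ℝ) → (Fin N → ℝ) := fun y i => Real.sin (y i) with hf_def
  set f' : (Fin N → ℝ) → ((Fin N → ℝ) →L[ℝ] (Fin N → ℝ)) := fun y =>
    ContinuousLinearMap.pi (fun i => Real.cos (y i) • ContinuousLinearMap.proj i) with hf'_def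
  have hderiv : ∀ y ∈ ASet N, HasFDerivWithinAt f (f' y) (ASet N) y := by
    intro y _
    refine (hasFDerivAt_pi.2 fun i => ?_).hasFDerivWithinAt
    exact (Real.hasDerivAt_sin (y i)).comp_hasFDerivAt y (hasFDerivAt_apply (𝕜 := ℝ) (F' := fun _ : Fin N => ℝ) i y)
  have hdet : ∀ y : Fin N → ℝ, (f' y).det = ∏ i, Real.cos (y i) := by
    intro y
    have h : ((f' y) : (Fin N → ℝ) →ₗ[ℝ] (Fin N → ℝ)) =
        Matrix.toLin' (Matrix.diagonal fun i => Real.cos (y i)) := by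
      apply LinearMap.ext
      intro v
      funext i
      simp [hf'_def, Matrix.toLin'_apply, Matrix.mulVec_diagonal,
        ContinuousLinearMap.proj_apply]
    show LinearMap.det ((f' y) : (Fin N → ℝ) →ₗ[ℝ] (Fin N → ℝ)) = _
    rw [h, LinearMap.det_toLin', Matrix.det_diagonal]
  have hinj : Set.InjOn f (ASet N) := by
    intro a ha b hb hab
    funext i
    have ha' : a i ∈ Set.Icc (-(π / 2)) (π / 2) :=
      ⟨by linarith [(ha.1 i).1, Real.pi_pos], (ha.1 i).2⟩
    have hb' : b i ∈ Set.Icc (-(π / 2)) (π / 2) :=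
      ⟨by linarith [(hb.1 i).1, Real.pi_pos], (hb.1 i).2⟩
    exact Real.injOn_sin ha' hb' (congrFun hab i)
  have key := MeasureTheory.integral_image_eq_integral_abs_det_fderiv_smul
    MeasureTheory.volume (ASet_measurable N) hderiv hinj
    (fun ξ => φ ξ * (JSpXi N ξ : ℂ))
  rw [image_ASet N] at key
  rw [key]
  apply MeasureTheory.setIntegral_congr_fun (ASet_measurable N)
  intro y hy
  have hcos : ∀ i, 0 ≤ Real.cos (y i) := fun i =>
    Real.cos_nonneg_of_mem_Icc ⟨by linarith [(hy.1 i).1, Real.pi_pos], (hy.1 i).2⟩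
  have habs : |(f' y).det| = ∏ i, Real.cos (y i) := by
    rw [hdet y, abs_of_nonneg (Finset.prod_nonneg fun i _ => hcos i)]
  simp only [habs, hf_def]
  rw [JSp_eq N y]
  push_cast
  rw [Complex.real_smul]
  push_cast
  ring
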